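/- With t(z₁,z₂) = 1 + 2(z₁−z₂)(z̄₂−z̄₁)/((z₁−z̄₁)(z₂−z̄₂)) and Q_{z₂}(z₁) = (z₁−z₂)(z₁−z̄₂)/(z₂−z̄₂), one has ∂t/∂z₁ = ((t²−1)/2)·Q_{z₂}(z₁)^{−1}, provided z₁ ∉ {z₂, z̄₂} and z_i ≠ z̄_i. -/

import Mathlib

/-- `t(z₁,z₂) = 1 + 2(z₁−z₂)(z̄₂−z̄₁)/((z₁−z̄₁)(z₂−z̄₂))`, with `z̄₁ = w₁`, `z̄₂ = w₂`
treated as independent antiholomorphic variables. -/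
noncomputable def tdist (z₁ z₂ w₁ w₂ : ℂ) : ℂ :=
  1 + 2 * (z₁ - z₂) * (w₂ - w₁) / ((z₁ - w₁) * (z₂ - w₂))

/-- with `Q_{z₂}(z₁) = (z₁−z₂)(z₁−z̄₂)/(z₂−z̄₂)` one has
`∂t/∂z₁ = ((t²−1)/2)·Q_{z₂}(z₁)⁻¹`, provided `z₁ ∉ {z₂, z̄₂}` and `z_i ≠ z̄_i`. -/
theorem statement3 (z₁ z₂ w₁ w₂ : ℂ) (h11 : z₁ ≠ w₁) (h22 : z₂ ≠ w₂)
    (hz : z₁ ≠ z₂) (h12 : z₁ ≠ w₂) :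
    deriv (fun z => tdist z z₂ w₁ w₂) z₁ =
      (tdist z₁ z₂ w₁ w₂ ^ 2 - 1) / 2 * ((z₁ - z₂) * (z₁ - w₂) / (z₂ - w₂))⁻¹ := by
  have h11' : z₁ - w₁ ≠ 0 := sub_ne_zero.mpr h11
  have h22' : z₂ - w₂ ≠ 0 := sub_ne_zero.mpr h22
  have hz' : z₁ - z₂ ≠ 0 := sub_ne_zero.mpr hz
  have h12' : z₁ - w₂ ≠ 0 := sub_ne_zero.mpr h12
  have hf : (fun z => tdist z z₂ w₁ w₂) =
      fun z => 1 + (2 * (z - z₂) * (w₂ - w₁) * (z₂ - w₂)⁻¹) * (z - w₁)⁻¹ := by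
    funext z
    simp [tdist, div_eq_mul_inv, mul_inv]
    ring
  rw [hf]
  have hA : HasDerivAt (fun z : ℂ => 2 * (z - z₂) * (w₂ - w₁) * (z₂ - w₂)⁻¹)
      (2 * (w₂ - w₁) * (z₂ - w₂)⁻¹) z₁ := by
    have h := ((hasDerivAt_id z₁).sub_const z₂).const_mul (2 : ℂ)
    have := (h.mul_const (w₂ - w₁)).mul_const (z₂ - w₂)⁻¹
    simpa using this
  have hB : HasDerivAt (fun z : ℂ => (z - w₁)⁻¹) (-1 / (z₁ - w₁) ^ 2) z₁ := by
    have h := ((hasDerivAt_id z₁).sub_const w₁).inv h11'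
    exact (by simpa using h : HasDerivAt (fun x => x - w₁)⁻¹ (-1 / (z₁ - w₁) ^ 2) z₁)
  have hD := ((hA.mul hB).const_add (1 : ℂ))
  rw [(show HasDerivAt (fun z => 1 + 2 * (z - z₂) * (w₂ - w₁) * (z₂ - w₂)⁻¹ * (z - w₁)⁻¹) _ z₁ from hD).deriv]
  rw [tdist]
  field_simp
  ring
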